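/- There exists a₀ > 0 such that for every a with 0 < a < a₀ and every integer m ≥ 1 satisfying (s₁ + 2rs₁a)^m = 1/(4r²s₂²a²), one has φ((1−2ra)/(1+2ra)) > 1, where φ(λ) = λ^m · s₁^(m−1) · s₂ · (1+2ra)^m · (λ(1+2ra) − 1) · (s₂(2λ−1)(λ s₁(1+2ra) − 1) − s₁). -/

import Mathlib

set_option maxHeartbeats 1000000

noncomputable def phi (s₁ s₂ r a : ℝ) (m : ℕ) (l : ℝ) : ℝ :=
  l ^ m * s₁ ^ (m - 1) * s₂ * (1 + 2 * r * a) ^ m * (l * (1 + 2 * r * a) - 1) *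
    (s₂ * (2 * l - 1) * (l * s₁ * (1 + 2 * r * a) - 1) - s₁)

theorem stmt_12 (s₁ s₂ r : ℝ) (hs₁ : 1 < s₁) (hs₂ : 1 < s₂)
    (hsum : 1 / s₁ + 1 / s₂ = 1) (hr : 0 < r) :
    ∃ a₀ > 0, ∀ a : ℝ, 0 < a → a < a₀ → ∀ m : ℕ, 1 ≤ m →
      (s₁ + 2 * r * s₁ * a) ^ m = 1 / (4 * r ^ 2 * s₂ ^ 2 * a ^ 2) →
      1 < phi s₁ s₂ r a m ((1 - 2 * r * a) / (1 + 2 * r * a)) := by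
  have hs₁0 : (0:ℝ) < s₁ := by linarith
  have hs₂0 : (0:ℝ) < s₂ := by linarith
  have hs : s₁ * s₂ = s₁ + s₂ := by field_simp at hsum; linarith
  have hlog : 0 < Real.log s₁ := Real.log_pos hs₁
  set δ : ℝ := 2 - 2 / s₁ with hδdef
  have hδ0 : 0 < δ := by
    have : 2 / s₁ < 2 := by rw [div_lt_iff₀ hs₁0]; linarith
    simp only [hδdef]; linarith
  have hδ2 : δ < 2 := by
    have : 0 < 2 / s₁ := by positivity
    simp only [hδdef]; linarith
  have hδs₂ : 2 / s₂ = δ := by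
    have h1 : 1 / s₂ = 1 - 1 / s₁ := by linarith
    rw [hδdef]
    field_simp at h1 ⊢
    linarith
  clear_value δ
  set K : ℝ := 8 / Real.log s₁ with hKdef
  have hK0 : 0 < K := by rw [hKdef]; positivity
  clear_value K
  set t₀ : ℝ := min (δ/6) ((δ/(3*K))^2) with ht₀def
  have ht₀0 : 0 < t₀ := by
    rw [ht₀def]
    exact lt_min (by positivity) (by positivity)
  clear_value t₀
  refine ⟨t₀ / (2*r), by positivity, ?_⟩
  intro a ha haa m hm1 hmeq
  obtain ⟨k, rfl⟩ : ∃ k, m = k + 1 := ⟨m - 1, (Nat.succ_pred_eq_of_pos hm1).symm⟩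
  set t := 2 * r * a with htdef
  have ht : 0 < t := by rw [htdef]; positivity
  clear_value t
  have htt₀ : t < t₀ := by
    rw [htdef]
    calc 2 * r * a < 2 * r * (t₀ / (2*r)) := by
          apply mul_lt_mul_of_pos_left haa (by positivity)
      _ = t₀ := by field_simp
  have htmin : t < min (δ/6) ((δ/(3*K))^2) := by rw [← ht₀def]; exact htt₀
  have ht6 : t < δ/6 := lt_of_lt_of_le htmin (min_le_left _ _)
  have htsq : t < (δ/(3*K))^2 := lt_of_lt_of_le htmin (min_le_right _ _)
  have ht13 : t < 1/3 := by linarith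
  have h1t : (0:ℝ) < 1 + t := by linarith
  have hne1 : (1:ℝ) + t ≠ 0 := ne_of_gt h1t
  -- constraint in t form
  have hm' : s₁ ^ (k+1) * (1+t) ^ (k+1) * (s₂^2 * t^2) = 1 := by
    have e : s₁ + 2 * r * s₁ * a = s₁ * (1 + t) := by rw [htdef]; ring
    have e2 : 4 * r^2 * s₂^2 * a^2 = s₂^2 * t^2 := by rw [htdef]; ring
    rw [e, e2, mul_pow] at hmeq
    have hne : s₂^2 * t^2 ≠ 0 := by positivity
    field_simp at hmeq
    linarith [hmeq]
  set l := (1 - t) / (1 + t) with hldef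
  -- closed form
  have key : phi s₁ s₂ r a (k+1) l =
      l ^ (k+1) * ((s₂ + 4 - 3 * t * s₂) / (s₂ * (1 + t))) := by
    have h1 : l * (1 + t) - 1 = -t := by rw [hldef]; field_simp; ring
    have h2 : s₂ * (2 * l - 1) * (l * s₁ * (1 + t) - 1) - s₁
        = -(s₁ * (t * (s₂ + 4 - 3 * t * s₂))) / (1 + t) := by
      rw [hldef]; field_simp
      ring_nf
      linear_combination (1 - 3*t) * hs
    unfold phi
    simp only [Nat.add_sub_cancel]
    rw [← htdef, h1, h2]
    field_simp
    ring_nf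
    linear_combination (l^(k+1) * (s₂ + 4 - 3*t*s₂)) * hm'
  rw [key]
  -- bound on C
  have hC : 1 + δ ≤ (s₂ + 4 - 3 * t * s₂) / (s₂ * (1 + t)) := by
    rw [le_div_iff₀ (by positivity)]
    have h4 : 4 = 2 * δ * s₂ := by
      have := hδs₂
      field_simp at this ⊢
      linarith
    have p1 : t * s₂ < δ/6 * s₂ := mul_lt_mul_of_pos_right ht6 hs₂0
    have p2 : δ * (t * s₂) < δ * (δ/6 * s₂) := mul_lt_mul_of_pos_left p1 hδ0
    have p3 : δ * (δ/6 * s₂) ≤ 2 * (δ/6 * s₂) := by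
      apply mul_le_mul_of_nonneg_right hδ2.le (by positivity)
    nlinarith [p1, p2, p3]
  -- bound on l^m : first m ≤ 4 / (√t log s₁)
  set S := Real.sqrt t with hSdef
  have hS0 : 0 < S := Real.sqrt_pos.mpr ht
  have hS2 : S^2 = t := Real.sq_sqrt ht.le
  have hSlt : S < δ/(3*K) := by
    have := Real.sqrt_lt_sqrt ht.le htsq
    rwa [Real.sqrt_sq (by positivity)] at this
  have hpow : s₁ ^ (k+1) ≤ 1 / t^2 := by
    have honele : (1:ℝ) ≤ (1+t)^(k+1) := one_le_pow₀ (by linarith)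
    have h1 : s₁ ^ (k+1) ≤ s₁ ^ (k+1) * (1+t)^(k+1) :=
      le_mul_of_one_le_right (pow_pos hs₁0 (k+1)).le honele
    have h2 : s₁ ^ (k+1) * (1+t)^(k+1) = 1 / (s₂^2 * t^2) := by
      rw [eq_div_iff (by positivity : s₂^2 * t^2 ≠ 0)]
      exact hm'
    have h3 : 1 / (s₂^2 * t^2) ≤ 1 / t^2 := by
      apply one_div_le_one_div_of_le (by positivity)
      have h1s : (1:ℝ) ≤ s₂^2 := by nlinarith
      nlinarith [mul_le_mul_of_nonneg_right h1s (sq_nonneg t)]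
    calc s₁ ^ (k+1) ≤ s₁ ^ (k+1) * (1+t)^(k+1) := h1
      _ = 1 / (s₂^2 * t^2) := h2
      _ ≤ 1 / t^2 := h3
  have hmlog : (↑(k+1) : ℝ) * Real.log s₁ ≤ 4 / S := by
    have h1 : (↑(k+1) : ℝ) * Real.log s₁ = Real.log (s₁ ^ (k+1)) := by
      rw [Real.log_pow]
    have h2 : Real.log (s₁ ^ (k+1)) ≤ Real.log (1 / t^2) :=
      Real.log_le_log (pow_pos hs₁0 _) hpow
    have h3 : Real.log (1 / t^2) = -2 * Real.log t := by
      rw [one_div, Real.log_inv, Real.log_pow]; push_cast; ring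
    have h4 : Real.log t = 2 * Real.log S := by
      rw [← hS2, Real.log_pow]; push_cast; ring
    have h5 : Real.log (1/S) ≤ 1/S - 1 := Real.log_le_sub_one_of_pos (by positivity)
    have h6 : Real.log (1/S) = - Real.log S := by rw [one_div, Real.log_inv]
    have : -2 * Real.log t = 4 * (- Real.log S) := by rw [h4]; ring
    calc (↑(k+1) : ℝ) * Real.log s₁ ≤ -2 * Real.log t := by rw [h1]; linarith
      _ = 4 * (- Real.log S) := this
      _ ≤ 4 * (1/S - 1) := by rw [← h6]; linarith
      _ ≤ 4 / S := by
          have e : 4*(1/S - 1) = 4/S - 4 := by ring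
          linarith
  have htm : 2 * t * (↑(k+1) : ℝ) ≤ K * S := by
    have hm4 : (↑(k+1) : ℝ) ≤ 4 / (S * Real.log s₁) := by
      rw [le_div_iff₀ (by positivity)]
      calc (↑(k+1):ℝ) * (S * Real.log s₁) = S * ((↑(k+1):ℝ) * Real.log s₁) := by ring
        _ ≤ S * (4 / S) := by
            apply mul_le_mul_of_nonneg_left hmlog hS0.le
        _ = 4 := by field_simp
    have : 2 * t * (↑(k+1) : ℝ) ≤ 2 * t * (4 / (S * Real.log s₁)) := by
      apply mul_le_mul_of_nonneg_left hm4 (by positivity)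
    calc 2 * t * (↑(k+1) : ℝ) ≤ 2 * t * (4 / (S * Real.log s₁)) := this
      _ = K * S := by
          rw [hKdef, ← hS2]
          field_simp
          ring
  have hKS : K * S < δ / 3 := by
    have h := mul_lt_mul_of_pos_left hSlt hK0
    have hKne : K ≠ 0 := ne_of_gt hK0
    have e : K * (δ/(3*K)) = δ/3 := by field_simp
    linarith
  -- Bernoulli lower bound on l^m
  have hlm : 1 - δ/3 ≤ l ^ (k+1) := by
    have hb : 1 + (↑(k+1):ℝ) * (-(2*t)) ≤ (1 + (-(2*t))) ^ (k+1) := by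
      apply one_add_mul_le_pow (by linarith)
    have h12t : (0:ℝ) ≤ 1 - 2*t := by linarith
    have hle : (1:ℝ) - 2*t ≤ l := by
      rw [hldef, le_div_iff₀ h1t]
      nlinarith [sq_nonneg t]
    have hpow2 : (1 - 2*t)^(k+1) ≤ l^(k+1) := pow_le_pow_left₀ h12t hle _
    have : (1:ℝ) + (-(2*t)) = 1 - 2*t := by ring
    rw [this] at hb
    have h1 : 1 - 2 * t * (↑(k+1):ℝ) ≤ (1-2*t)^(k+1) := by
      calc 1 - 2 * t * (↑(k+1):ℝ) = 1 + (↑(k+1):ℝ) * (-(2*t)) := by ring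
        _ ≤ (1-2*t)^(k+1) := hb
    have h2 : 1 - δ/3 ≤ 1 - 2*t*(↑(k+1):ℝ) := by linarith [htm, hKS]
    linarith [hpow2]
  -- conclude
  have hl0 : 0 < 1 - δ/3 := by linarith
  calc (1:ℝ) < (1 - δ/3) * (1 + δ) := by nlinarith
    _ ≤ l^(k+1) * ((s₂ + 4 - 3 * t * s₂) / (s₂ * (1 + t))) := by
        apply mul_le_mul hlm hC (by linarith) (by linarith [hlm])
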